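/- Let K be a field and let S be an affine subspace of K^{m×n} with direction V. Suppose H ∈ S has exactly r nonzero entries, located at positions (1,j_1),…,(r,j_r) with j_1 < j_2 < ⋯ < j_r, all elements of S are in row echelon form, and all elements of S have rank r. Let D be the r-dimensional space of matrices supported on {(1,j_1),…,(r,j_r)}. Then V ∩ D = {0}. -/

import Mathlib

/-- Row echelon form. -/
def RowEchelon {K : Type*} [Field K] {m n : ℕ} (A : Matrix (Fin m) (Fin n) K) : Prop :=
  ∀ i₁ i₂ : Fin m, i₁ < i₂ → ∀ j : Fin n, A i₂ j ≠ 0 → ∃ j' : Fin n, j' < j ∧ A i₁ j' ≠ 0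

theorem stmt17 (K : Type*) [Field K] (m n r : ℕ) (hrm : r ≤ m)
    (S : AffineSubspace K (Matrix (Fin m) (Fin n) K))
    (H : Matrix (Fin m) (Fin n) K) (hH : H ∈ S)
    (jcol : Fin r → Fin n) (hmono : StrictMono jcol)
    (hsupp : ∀ (i : Fin m) (j : Fin n),
      H i j ≠ 0 ↔ ∃ t : Fin r, (i : ℕ) = (t : ℕ) ∧ j = jcol t)
    (hech : ∀ A ∈ S, RowEchelon A)
    (hrank : ∀ A ∈ S, A.rank = r) :
    ∀ v ∈ S.direction,
      (∀ (i : Fin m) (j : Fin n), v i j ≠ 0 → ∃ t : Fin r, (i : ℕ) = (t : ℕ) ∧ j = jcol t) →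
      v = 0 := by
  classical
  intro v hv hsuppv
  by_contra hvne
  -- find a nonzero entry of v
  obtain ⟨i, j, hij⟩ : ∃ i j, v i j ≠ 0 := by
    by_contra h
    push_neg at h
    exact hvne (by ext i j; simp [h i j])
  obtain ⟨t, hit, hjt⟩ := hsuppv i j hij
  set a : K := -(H i j) / (v i j) with ha
  set A : Matrix (Fin m) (Fin n) K := a • v + H with hAdef
  have hA : A ∈ S := by
    have := AffineSubspace.vadd_mem_of_mem_direction (S.direction.smul_mem a hv) hH
    simpa [vadd_eq_add] using this
  -- support of A is contained in pivot positions
  have hAsupp : ∀ i' j', A i' j' ≠ 0 → ∃ t' : Fin r, (i' : ℕ) = (t' : ℕ) ∧ j' = jcol t' := by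
    intro i' j' h
    have : a • v i' j' + H i' j' ≠ 0 := by simpa [hAdef, Matrix.add_apply] using h
    by_cases hv' : v i' j' = 0
    · exact (hsupp i' j').mp (by simpa [hv'] using this)
    · exact hsuppv i' j' hv'
  -- A's entry at (i, j) vanishes
  have hAij : A i j = 0 := by
    simp only [hAdef, Matrix.add_apply, Matrix.smul_apply, smul_eq_mul, ha]
    field_simp
    ring
  -- row i of A is zero
  have hrow : ∀ j', A i j' = 0 := by
    intro j'
    by_contra h
    obtain ⟨t', hit', hjt'⟩ := hAsupp i j' h
    have : t' = t := Fin.ext (hit'.symm.trans hit)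
    exact h (by rw [hjt', this, ← hjt, hAij])
  -- every row of A lies in the span of the r-1 single vectors away from t
  set T : Finset (Fin n → K) :=
    (Finset.univ.erase t).image (fun t' : Fin r => Pi.single (jcol t') (1 : K)) with hT
  have hrows : ∀ i', A i' ∈ Submodule.span K (T : Set (Fin n → K)) := by
    intro i'
    by_cases hz : A i' = 0
    · rw [hz]; exact Submodule.zero_mem _
    · obtain ⟨j', hj'⟩ : ∃ j', A i' j' ≠ 0 := by
        by_contra h; push_neg at h; exact hz (funext h)
      obtain ⟨t', hit', hjt'⟩ := hAsupp i' j' hj'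
      have htt : t' ≠ t := by
        intro h
        apply hj'
        have : i' = i := Fin.ext (by rw [hit', h, ← hit])
        rw [this]; exact hrow j'
      have hrow' : A i' = (A i' (jcol t')) • (Pi.single (jcol t') (1 : K) : Fin n → K) := by
        funext j''
        by_cases hj'' : j'' = jcol t'
        · subst hj''; simp
        · have : A i' j'' = 0 := by
            by_contra h
            obtain ⟨t'', hit'', hjt''⟩ := hAsupp i' j'' h
            have : t'' = t' := Fin.ext (hit''.symm.trans hit')
            exact hj'' (by rw [hjt'', this])
          simp [this, Pi.single_apply, hj'']
      rw [hrow']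
      exact Submodule.smul_mem _ _ (Submodule.subset_span (by
        simp only [hT, Finset.coe_image, Set.mem_image, Finset.mem_coe, Finset.mem_erase]
        exact ⟨t', ⟨htt, Finset.mem_univ t'⟩, rfl⟩))
  -- rank bound
  have hrankA : A.rank = r := hrank A hA
  have hle : A.rank ≤ T.card := by
    rw [Matrix.rank_eq_finrank_span_row]
    calc Module.finrank K (Submodule.span K (Set.range A))
        ≤ Module.finrank K (Submodule.span K (T : Set (Fin n → K))) := by
          apply Submodule.finrank_mono
          rw [Submodule.span_le]
          rintro x ⟨i', rfl⟩
          exact hrows i'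
      _ ≤ T.card := finrank_span_finset_le_card T
  have hTcard : T.card < r := by
    calc T.card ≤ (Finset.univ.erase t).card := Finset.card_image_le
      _ < Finset.univ.card := Finset.card_erase_lt_of_mem (Finset.mem_univ t)
      _ = r := Finset.card_fin r
  omega
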